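/- arXiv:1811.00577 — 2 statements merged into one kernel-verified Lean document; each statement's English description precedes it below -/
import Mathlib

section
/- Scaling identity between the L0 and L1 dual functions: for q ∈ {0, 1} define the dual function d_q(μ, ν) := inf over measurable X : Ω → ℂ with |X(β)| ≤ Γ a.e. and z ∈ ℂᵖ of ‖X‖_{L_q} + Σᵢ νᵢ gᵢ(z) + Re[μᴴ(∫_Ω F(X(β), β) dβ − z)], for μ ∈ ℂᵖ and ν ∈ ℝ₊ᵐ. Assume F(0, β) = 0 for all β, each component of F is a Carathéodory integrand with integrable pointwise minima, and the saturation hypothesis: every minimizer x° of |x| + Re[μᴴ F(x, β)] over {|x| ≤ Γ} satisfies x° ≠ 0 ⟹ |x°| = Γ, for all μ ∈ ℂᵖ, β ∈ Ω. Then for all μ ∈ ℂᵖ and ν ∈ ℝ₊ᵐ, d₀(μ, ν) = (1/Γ) · d₁(Γμ, Γν). -/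
open MeasureTheory

noncomputable section

/-- The Lebesgue measure restricted to `Ω ⊆ ℝⁿ`. -/
def mOmega {n : ℕ} (Ω : Set (Fin n → ℝ)) : Measure (Fin n → ℝ) :=
  volume.restrict Ω

/-- The "L0-norm": the (restricted Lebesgue) measure of the support of `X`. -/
def L0norm {n : ℕ} (Ω : Set (Fin n → ℝ)) (X : (Fin n → ℝ) → ℂ) : ℝ :=
  (mOmega Ω {β | X β ≠ 0}).toReal

/-- `Re[μᴴ x]` for vectors `μ, x ∈ ℂᵖ`. -/
def reInner {p : ℕ} (μ x : Fin p → ℂ) : ℝ :=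
  (∑ i, (starRingEnd ℂ) (μ i) * x i).re

/-- The dual function of the `L_q`-norm minimization problem, for an abstract norm
functional `nrm` in place of `‖·‖_{L_q}`:  the infimum over measurable `X` with
`|X| ≤ Γ` a.e. and `z ∈ ℂᵖ` of
`nrm(X) + Σᵢ νᵢ gᵢ(z) + Re[μᴴ(∫_Ω F(X(β), β) dβ − z)]`, as an extended real. -/
def dualQ {n p m : ℕ} (Ω : Set (Fin n → ℝ)) (F : ℂ → (Fin n → ℝ) → Fin p → ℂ)
    (g : Fin m → (Fin p → ℂ) → ℝ) (Γ : ℝ) (nrm : ((Fin n → ℝ) → ℂ) → ℝ)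
    (μ : Fin p → ℂ) (ν : Fin m → ℝ) : EReal :=
  sInf ((fun Xz : ((Fin n → ℝ) → ℂ) × (Fin p → ℂ) =>
      ((nrm Xz.1 + ∑ i, ν i * g i Xz.2
        + reInner μ ((∫ β, F (Xz.1 β) β ∂(mOmega Ω)) - Xz.2) : ℝ) : EReal)) ''
    {Xz | Measurable Xz.1 ∧ ∀ᵐ β ∂(mOmega Ω), ‖Xz.1 β‖ ≤ Γ})

/-- The dual function of the L0-norm minimization problem. -/
def dual0 {n p m : ℕ} (Ω : Set (Fin n → ℝ)) (F : ℂ → (Fin n → ℝ) → Fin p → ℂ)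
    (g : Fin m → (Fin p → ℂ) → ℝ) (Γ : ℝ) (μ : Fin p → ℂ) (ν : Fin m → ℝ) : EReal :=
  dualQ Ω F g Γ (L0norm Ω) μ ν

/-- The dual function of the L1-norm minimization problem. -/
def dual1 {n p m : ℕ} (Ω : Set (Fin n → ℝ)) (F : ℂ → (Fin n → ℝ) → Fin p → ℂ)
    (g : Fin m → (Fin p → ℂ) → ℝ) (Γ : ℝ) (μ : Fin p → ℂ) (ν : Fin m → ℝ) : EReal :=
  dualQ Ω F g Γ (fun X => ∫ β, ‖X β‖ ∂(mOmega Ω)) μ ν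

namespace DualAux
variable {p : ℕ}
def reInnerL (μ : Fin p → ℂ) : (Fin p → ℂ) →ₗ[ℝ] ℝ where
  toFun := reInner μ
  map_add' x y := by simp [reInner, mul_add, Finset.sum_add_distrib]
  map_smul' r x := by
    simp only [reInner, Pi.smul_apply, Complex.real_smul, RingHom.id_apply, smul_eq_mul]
    rw [show (∑ i, (starRingEnd ℂ) (μ i) * ((r : ℂ) * x i))
        = (r : ℂ) * ∑ i, (starRingEnd ℂ) (μ i) * x i by
      rw [Finset.mul_sum]; exact Finset.sum_congr rfl fun i _ => mul_left_comm _ _ _]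
    exact Complex.re_ofReal_mul _ _
def LL (μ : Fin p → ℂ) : (Fin p → ℂ) →L[ℝ] ℝ := LinearMap.toContinuousLinearMap (reInnerL μ)
@[simp] lemma LL_apply (μ v : Fin p → ℂ) : LL μ v = reInner μ v := rfl
lemma reInner_zero (μ : Fin p → ℂ) : reInner μ 0 = 0 := map_zero (LL μ)
lemma reInner_sub (μ a b : Fin p → ℂ) :
    reInner μ (a - b) = reInner μ a - reInner μ b := map_sub (LL μ) a b
lemma reInner_scale (Γ : ℝ) (μ v : Fin p → ℂ) :
    reInner (fun i => (Γ : ℂ) * μ i) v = Γ * reInner μ v := by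
  simp only [reInner]
  rw [show (∑ i, (starRingEnd ℂ) ((Γ : ℂ) * μ i) * v i)
      = (Γ : ℂ) * ∑ i, (starRingEnd ℂ) (μ i) * v i by
    rw [Finset.mul_sum]
    refine Finset.sum_congr rfl fun i _ => ?_
    rw [map_mul, Complex.conj_ofReal, mul_assoc]]
  exact Complex.re_ofReal_mul _ _

/-- A countable family: `0` together with a dense family in the circle of radius `Γ`. -/
def circ (Γ : ℝ) : ℕ → ℂ := fun k =>
  if k = 0 then 0
  else (Γ : ℂ) * Complex.exp ((((Denumerable.eqv ℚ).symm (k - 1) : ℚ) : ℝ) * Complex.I)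

lemma circ_abs (Γ : ℝ) (hΓ : 0 ≤ Γ) {k : ℕ} (hk : k ≠ 0) : ‖circ Γ k‖ = Γ := by
  rw [circ, if_neg hk, norm_mul, Complex.norm_exp]
  simp [abs_of_nonneg hΓ, Complex.mul_I_re]

lemma circ_mem (Γ : ℝ) (hΓ : 0 ≤ Γ) (k : ℕ) : ‖circ Γ k‖ ≤ Γ := by
  rcases eq_or_ne k 0 with h | h
  · simp [circ, h, hΓ]
  · rw [circ_abs Γ hΓ h]

lemma circ_zero (Γ : ℝ) : circ Γ 0 = 0 := by simp [circ]

lemma circ_dense (Γ : ℝ) (hΓ : 0 < Γ) (x : ℂ) (hx : ‖x‖ = Γ)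
    (δ : ℝ) (hδ : 0 < δ) :
    ∃ k, circ Γ k ≠ 0 ∧ ‖circ Γ k - x‖ < δ := by
  have hc : Continuous fun t : ℝ => (Γ : ℂ) * Complex.exp ((t : ℂ) * Complex.I) := by
    continuity
  set θ := Complex.arg x with hθ
  have hxeq : (Γ : ℂ) * Complex.exp ((θ : ℂ) * Complex.I) = x := by
    have h := Complex.norm_mul_exp_arg_mul_I x
    rw [hx] at h; exact h
  obtain ⟨η, hη, hball⟩ := Metric.continuous_iff.mp hc θ δ hδ
  obtain ⟨q, hq⟩ := exists_rat_near θ hη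
  set k := (Denumerable.eqv ℚ) q + 1 with hk
  have hkc : circ Γ k = (Γ : ℂ) * Complex.exp (((q : ℝ) : ℂ) * Complex.I) := by
    simp only [circ, hk, if_neg (Nat.succ_ne_zero _), Nat.add_sub_cancel,
      Equiv.symm_apply_apply]
  refine ⟨k, ?_, ?_⟩
  · intro h0
    have := circ_abs Γ hΓ.le (Nat.succ_ne_zero ((Denumerable.eqv ℚ) q) : k ≠ 0)
    rw [h0] at this; simp at this; linarith
  · have hd : dist ((q : ℝ)) θ < η := by
      rw [Real.dist_eq, abs_sub_comm]; exact hq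
    have h2 := hball (q : ℝ) hd
    rw [Complex.dist_eq] at h2
    rw [hkc, ← hxeq]
    exact h2

/-- Measurable near-optimal selection for the L0 objective. -/
lemma selection {n : ℕ} (Ω : Set (Fin n → ℝ)) (F : ℂ → (Fin n → ℝ) → Fin p → ℂ)
    (Γ : ℝ) (hΓ : 0 < Γ) (hF0 : ∀ β, F 0 β = 0)
    (hFc : ∀ β ∈ Ω, ∀ i, Continuous fun x => F x β i)
    (hFm : ∀ (x : ℂ) i, Measurable fun β => F x β i)
    (μ : Fin p → ℂ) (M M' : (Fin n → ℝ) → ℝ) (hM' : Measurable M')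
    (hMM' : M =ᵐ[mOmega Ω] M')
    (hMspec : ∀ β ∈ Ω, ∃ x₀ : ℂ, ‖x₀‖ ≤ Γ ∧ (x₀ = 0 ∨ ‖x₀‖ = Γ) ∧
        (if x₀ = 0 then (0 : ℝ) else 1) + reInner μ (F x₀ β) = M β)
    (hΩmeas : MeasurableSet Ω)
    (ε' : ℝ) (hε' : 0 < ε') :
    ∃ X' : (Fin n → ℝ) → ℂ, Measurable X' ∧ (∀ β, ‖X' β‖ ≤ Γ) ∧
      ∀ᵐ β ∂(mOmega Ω),
        (if X' β = 0 then (0 : ℝ) else 1) + reInner μ (F (X' β) β) ≤ M β + ε' := by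
  classical
  set v := circ Γ with hv
  set f : ℕ → (Fin n → ℝ) → ℝ :=
    fun k β => (if v k = 0 then (0 : ℝ) else 1) + reInner μ (F (v k) β) with hf
  have hfm : ∀ k, Measurable (f k) := fun k =>
    measurable_const.add ((LL μ).measurable.comp (measurable_pi_lambda _ fun i => hFm (v k) i))
  set q : ℕ → (Fin n → ℝ) → Prop :=
    fun k β => f k β ≤ M' β + ε' ∨ ∀ j, ¬ (f j β ≤ M' β + ε') with hqdef
  have hqtot : ∀ β, ∃ k, q k β := by
    intro β
    by_cases h : ∃ j, f j β ≤ M' β + ε'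
    · obtain ⟨j, hj⟩ := h; exact ⟨j, Or.inl hj⟩
    · push_neg at h; exact ⟨0, Or.inr fun j => not_le.2 (h j)⟩
  have hqmeas : ∀ k, MeasurableSet {β | q k β} := by
    intro k
    have hA : ∀ j, MeasurableSet {β | f j β ≤ M' β + ε'} := fun j =>
      measurableSet_le (hfm j) (hM'.add_const _)
    have : {β | q k β} = {β | f k β ≤ M' β + ε'} ∪ ⋂ j, {β | f j β ≤ M' β + ε'}ᶜ := by
      ext β; simp [hqdef]
    rw [this]
    exact (hA k).union (MeasurableSet.iInter fun j => (hA j).compl)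
  have hΩae : ∀ᵐ β ∂(mOmega Ω), β ∈ Ω := ae_restrict_mem hΩmeas
  refine ⟨fun β => v (Nat.find (hqtot β)),
    Measurable.find (f := fun k _ => v k) (fun k => measurable_const) hqmeas hqtot,
    fun β => circ_mem Γ hΓ.le _, ?_⟩
  filter_upwards [hMM', hΩae] with β hMβ hβΩ
  obtain ⟨x₀, hx₀B, hx₀alt, hx₀eq⟩ := hMspec β hβΩ
  have hex : ∃ j, f j β ≤ M' β + ε' := by
    rcases eq_or_ne x₀ 0 with h0 | h0
    · refine ⟨0, ?_⟩
      have : f 0 β = 0 := by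
        rw [hf]; simp [hv, circ_zero, hF0, reInner_zero]
      rw [this, ← hMβ, ← hx₀eq, if_pos h0, h0, hF0, reInner_zero]
      linarith
    · have habs : ‖x₀‖ = Γ := hx₀alt.resolve_left h0
      have hφc : Continuous fun x : ℂ => reInner μ (F x β) :=
        (LL μ).continuous.comp (continuous_pi fun i => hFc β hβΩ i)
      obtain ⟨η, hη, hball⟩ := Metric.continuous_iff.mp hφc x₀ ε' hε'
      obtain ⟨k, hkne, hkclose⟩ := circ_dense Γ hΓ x₀ habs η hη
      refine ⟨k, ?_⟩
      have hd : dist (v k) x₀ < η := by rw [Complex.dist_eq]; exact hkclose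
      have h2 := hball (v k) hd
      rw [Real.dist_eq] at h2
      have h3 : reInner μ (F (v k) β) < reInner μ (F x₀ β) + ε' := by
        have := abs_sub_lt_iff.mp h2
        linarith [this.1]
      have h4 : f k β = 1 + reInner μ (F (v k) β) := by rw [hf]; simp [hv, hkne]
      have h5 : M β = 1 + reInner μ (F x₀ β) := by rw [← hx₀eq, if_neg h0]
      rw [h4, ← hMβ, h5]
      linarith
  have hspec := Nat.find_spec (hqtot β)
  rcases hspec with h | h
  · rw [hMβ]; exact h
  · obtain ⟨j, hj⟩ := hex; exact absurd hj (h j)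

/-- Abstract `sInf` scaling over `EReal`. -/
lemma sInf_scaling {α : Type*} (s : Set α) (hs : s.Nonempty) (v0 v1 : α → ℝ)
    (Γ : ℝ) (hΓ : 0 < Γ)
    (h1 : ∀ a ∈ s, v1 a ≤ Γ * v0 a)
    (h2 : ∀ a ∈ s, ∀ ε : ℝ, 0 < ε → ∃ a' ∈ s, v0 a' ≤ Γ⁻¹ * v1 a + ε) :
    sInf ((fun a => ((v0 a : ℝ) : EReal)) '' s)
      = ((1 / Γ : ℝ) : EReal) * sInf ((fun a => ((v1 a : ℝ) : EReal)) '' s) := by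
  obtain ⟨a₀, ha₀⟩ := hs
  set S0 := (fun a => ((v0 a : ℝ) : EReal)) '' s with hS0
  set S1 := (fun a => ((v1 a : ℝ) : EReal)) '' s with hS1
  have hc : (0 : ℝ) < 1 / Γ := by positivity
  have hmem1 : ((v1 a₀ : ℝ) : EReal) ∈ S1 := ⟨a₀, ha₀, rfl⟩
  have htne : sInf S1 ≠ ⊤ := by
    intro h
    exact EReal.coe_ne_top _ (top_le_iff.mp (h ▸ sInf_le hmem1))
  by_cases hbot : sInf S1 = ⊥
  · rw [hbot, EReal.coe_mul_bot_of_pos hc, sInf_eq_bot]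
    intro b hb
    by_cases hbtop : b = ⊤
    · exact ⟨_, ⟨a₀, ha₀, rfl⟩, hbtop ▸ EReal.coe_lt_top _⟩
    · have hbne : b ≠ ⊥ := hb.ne'
      have hbr : b = ((b.toReal : ℝ) : EReal) := (EReal.coe_toReal hbtop hbne).symm
      set r := b.toReal with hrdef
      have hlt : sInf S1 < (((r - 2) * Γ : ℝ) : EReal) := by
        rw [hbot]; exact EReal.bot_lt_coe _
      obtain ⟨b₁, hb₁S, hb₁lt⟩ := sInf_lt_iff.mp hlt
      obtain ⟨a, ha, rfl⟩ := hb₁S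
      have hv1 : v1 a < (r - 2) * Γ := EReal.coe_lt_coe_iff.mp hb₁lt
      obtain ⟨a', ha', hva'⟩ := h2 a ha 1 one_pos
      refine ⟨_, ⟨a', ha', rfl⟩, ?_⟩
      rw [hbr]
      have hlt2 : v0 a' < r := by
        have h3 : Γ⁻¹ * v1 a < Γ⁻¹ * ((r - 2) * Γ) :=
          mul_lt_mul_of_pos_left hv1 (by positivity)
        have h4 : Γ⁻¹ * ((r - 2) * Γ) = r - 2 := by field_simp
        nlinarith
      exact EReal.coe_lt_coe_iff.mpr hlt2
  · have hr : sInf S1 = (((sInf S1).toReal : ℝ) : EReal) := (EReal.coe_toReal htne hbot).symm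
    set r := (sInf S1).toReal with hrdef
    rw [hr, ← EReal.coe_mul]
    refine le_antisymm ?_ ?_
    · refine le_of_forall_gt_imp_ge_of_dense fun w hw => ?_
      by_cases hwtop : w = ⊤
      · rw [hwtop]; exact le_top
      · have hwne : w ≠ ⊥ := by
          intro h; rw [h] at hw; exact not_lt_bot hw
        have hws : w = ((w.toReal : ℝ) : EReal) := (EReal.coe_toReal hwtop hwne).symm
        set sR := w.toReal with hsRdef
        have hlt : 1 / Γ * r < sR := by
          rw [hws] at hw; exact EReal.coe_lt_coe_iff.mp hw
        set ε : ℝ := (sR - 1 / Γ * r) / 2 with hεdef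
        have hεpos : 0 < ε := by rw [hεdef]; linarith
        have hS1lt : sInf S1 < ((r + ε * Γ : ℝ) : EReal) := by
          rw [hr]
          have hrr : r < r + ε * Γ := by nlinarith
          exact EReal.coe_lt_coe_iff.mpr hrr
        obtain ⟨b₁, hb₁S, hb₁lt⟩ := sInf_lt_iff.mp hS1lt
        obtain ⟨a, ha, rfl⟩ := hb₁S
        have hv1 : v1 a < r + ε * Γ := EReal.coe_lt_coe_iff.mp hb₁lt
        obtain ⟨a', ha', hva'⟩ := h2 a ha ε hεpos
        have hv0 : v0 a' ≤ sR := by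
          have h3 : Γ⁻¹ * v1 a ≤ Γ⁻¹ * (r + ε * Γ) := by
            have := inv_pos.mpr hΓ; nlinarith
          have h4 : Γ⁻¹ * (r + ε * Γ) = Γ⁻¹ * r + ε := by
            rw [mul_add]
            congr 1
            field_simp
          have h5 : Γ⁻¹ * r = 1 / Γ * r := by rw [one_div]
          nlinarith
        calc sInf S0 ≤ ((v0 a' : ℝ) : EReal) := sInf_le ⟨a', ha', rfl⟩
          _ ≤ ((sR : ℝ) : EReal) := EReal.coe_le_coe_iff.mpr hv0
          _ = w := hws.symm
    · refine le_sInf fun b hb => ?_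
      obtain ⟨a, ha, rfl⟩ := hb
      have hge : r ≤ v1 a := by
        have hmem : ((v1 a : ℝ) : EReal) ∈ S1 := ⟨a, ha, rfl⟩
        have h6 := sInf_le hmem
        rw [hr] at h6
        exact EReal.coe_le_coe_iff.mp h6
      have h7 := h1 a ha
      have h8 : 1 / Γ * r ≤ v0 a := by
        have h9 : 1 / Γ * v1 a ≤ 1 / Γ * (Γ * v0 a) := by nlinarith
        have h10 : 1 / Γ * (Γ * v0 a) = v0 a := by field_simp
        nlinarith
      exact EReal.coe_le_coe_iff.mpr h8
/-- The pointwise minimization facts on `Ω`. -/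
lemma pointwise_min {n : ℕ} (Ω : Set (Fin n → ℝ)) (F : ℂ → (Fin n → ℝ) → Fin p → ℂ)
    (Γ : ℝ) (hΓ : 0 < Γ) (hF0 : ∀ β, F 0 β = 0)
    (hFc : ∀ β ∈ Ω, ∀ i, Continuous fun x => F x β i)
    (hsat : ∀ (μ : Fin p → ℂ), ∀ β ∈ Ω, ∀ x : ℂ, ‖x‖ ≤ Γ →
      (∀ x' : ℂ, ‖x'‖ ≤ Γ →
        ‖x‖ + reInner μ (F x β) ≤ ‖x'‖ + reInner μ (F x' β)) →
      x ≠ 0 → ‖x‖ = Γ)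
    (μ : Fin p → ℂ) (β : Fin n → ℝ) (hβ : β ∈ Ω) :
    (∀ x : ℂ, ‖x‖ ≤ Γ →
        Γ⁻¹ * sInf ((fun x => ‖x‖ + reInner (fun i => (Γ : ℂ) * μ i) (F x β)) ''
            {x : ℂ | ‖x‖ ≤ Γ})
          ≤ Γ⁻¹ * ‖x‖ + reInner μ (F x β))
    ∧ ∃ x₀ : ℂ, ‖x₀‖ ≤ Γ ∧ (x₀ = 0 ∨ ‖x₀‖ = Γ) ∧
        (if x₀ = 0 then (0 : ℝ) else 1) + reInner μ (F x₀ β)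
          = Γ⁻¹ * sInf ((fun x => ‖x‖ + reInner (fun i => (Γ : ℂ) * μ i) (F x β)) ''
              {x : ℂ | ‖x‖ ≤ Γ}) := by
  classical
  set μ₁ : Fin p → ℂ := fun i => (Γ : ℂ) * μ i with hμ₁
  set G : ℂ → ℝ := fun x => ‖x‖ + reInner μ₁ (F x β) with hG
  set B : Set ℂ := {x : ℂ | ‖x‖ ≤ Γ} with hB
  have hBne : B.Nonempty := ⟨0, by simp [hB, hΓ.le]⟩
  have hBc : IsCompact B := by
    have : B = Metric.closedBall (0 : ℂ) Γ := by
      ext x; simp [hB, Metric.mem_closedBall, Complex.dist_eq]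
    rw [this]; exact isCompact_closedBall _ _
  have hGc : Continuous G :=
    continuous_norm.add ((LL μ₁).continuous.comp (continuous_pi fun i => hFc β hβ i))
  obtain ⟨x₀, hx₀B, hx₀min⟩ := hBc.exists_isMinOn hBne hGc.continuousOn
  rw [isMinOn_iff] at hx₀min
  have hsInf : sInf (G '' B) = G x₀ :=
    IsLeast.csInf_eq ⟨⟨x₀, hx₀B, rfl⟩, by rintro y ⟨x, hx, rfl⟩; exact hx₀min x hx⟩
  have hGx : ∀ x, G x = ‖x‖ + Γ * reInner μ (F x β) := by
    intro x; rw [hG]; simp only [hμ₁, reInner_scale]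
  constructor
  · intro x hx
    have h1 : G x₀ ≤ G x := hx₀min x hx
    have h2 : Γ⁻¹ * sInf (G '' B) ≤ Γ⁻¹ * G x := by
      rw [hsInf]; exact mul_le_mul_of_nonneg_left h1 (inv_nonneg.2 hΓ.le)
    calc Γ⁻¹ * sInf (G '' B) ≤ Γ⁻¹ * G x := h2
      _ = Γ⁻¹ * ‖x‖ + reInner μ (F x β) := by
          rw [hGx]; field_simp
  · refine ⟨x₀, hx₀B, ?_, ?_⟩
    · rcases eq_or_ne x₀ 0 with h | h
      · exact Or.inl h
      · exact Or.inr (hsat μ₁ β hβ x₀ hx₀B (fun x' hx' => hx₀min x' hx') h)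
    · rcases eq_or_ne x₀ 0 with h | h
      · rw [if_pos h, hsInf, h, hGx]
        simp [hF0, reInner_zero]
      · have habs : ‖x₀‖ = Γ :=
          hsat μ₁ β hβ x₀ hx₀B (fun x' hx' => hx₀min x' hx') h
        rw [if_neg h, hsInf, hGx, habs]
        field_simp
end DualAux

/-- **Scaling identity between the L0 and L1 dual functions:**
`d₀(μ, ν) = (1/Γ) · d₁(Γμ, Γν)` for all `μ ∈ ℂᵖ`, `ν ∈ ℝ₊ᵐ`, under the saturation
hypothesis, `F(0, ·) = 0`, and Carathéodory/integrability assumptions. -/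
theorem dual_scaling_identity
    {n p m : ℕ} (Ω : Set (Fin n → ℝ)) (hΩ : IsCompact Ω)
    (F : ℂ → (Fin n → ℝ) → Fin p → ℂ) (g : Fin m → (Fin p → ℂ) → ℝ)
    (hg : ∀ i, ConvexOn ℝ Set.univ (g i))
    (Γ : ℝ) (hΓ : 0 < Γ)
    (hF0 : ∀ β, F 0 β = 0)
    (hFc : ∀ β ∈ Ω, ∀ i, Continuous fun x => F x β i)
    (hFm : ∀ (x : ℂ) i, Measurable fun β => F x β i)
    (hintmin : ∀ μ : Fin p → ℂ, Integrable (fun β =>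
      sInf ((fun x => ‖x‖ + reInner μ (F x β)) '' {x : ℂ | ‖x‖ ≤ Γ}))
      (mOmega Ω))
    (hintF : ∀ X : (Fin n → ℝ) → ℂ, Measurable X →
      (∀ᵐ β ∂(mOmega Ω), ‖X β‖ ≤ Γ) →
      Integrable (fun β => F (X β) β) (mOmega Ω))
    (hsat : ∀ (μ : Fin p → ℂ), ∀ β ∈ Ω, ∀ x : ℂ, ‖x‖ ≤ Γ →
      (∀ x' : ℂ, ‖x'‖ ≤ Γ →
        ‖x‖ + reInner μ (F x β) ≤ ‖x'‖ + reInner μ (F x' β)) →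
      x ≠ 0 → ‖x‖ = Γ) :
    ∀ (μ : Fin p → ℂ) (ν : Fin m → ℝ), (∀ i, 0 ≤ ν i) →
      dual0 Ω F g Γ μ ν
        = ((1 / Γ : ℝ) : EReal)
          * dual1 Ω F g Γ (fun i => (Γ : ℂ) * μ i) (fun i => Γ * ν i) := by
  intro μ ν hν
  classical
  have hΩmeas : MeasurableSet Ω := hΩ.isClosed.measurableSet
  haveI hfinm : IsFiniteMeasure (mOmega Ω) := by
    constructor
    unfold mOmega
    rw [Measure.restrict_apply_univ]
    exact hΩ.measure_lt_top
  have hΩae : ∀ᵐ β ∂(mOmega Ω), β ∈ Ω := by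
    unfold mOmega
    exact ae_restrict_mem hΩmeas
  set M : (Fin n → ℝ) → ℝ := fun β =>
    Γ⁻¹ * sInf ((fun x => ‖x‖ + reInner (fun i => (Γ : ℂ) * μ i) (F x β)) ''
      {x : ℂ | ‖x‖ ≤ Γ}) with hMdef
  have hMint : Integrable M (mOmega Ω) := (hintmin (fun i => (Γ : ℂ) * μ i)).const_mul Γ⁻¹
  have hpt := fun (β : Fin n → ℝ) (hβ : β ∈ Ω) =>
    DualAux.pointwise_min Ω F Γ hΓ hF0 hFc hsat μ β hβ
  -- basic integrability facts for feasible X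
  have hXfacts : ∀ X : (Fin n → ℝ) → ℂ, Measurable X →
      (∀ᵐ β ∂(mOmega Ω), ‖X β‖ ≤ Γ) →
      Integrable (fun β => ‖X β‖) (mOmega Ω)
      ∧ Integrable (fun β => reInner μ (F (X β) β)) (mOmega Ω)
      ∧ (∫ β, reInner μ (F (X β) β) ∂(mOmega Ω))
          = reInner μ (∫ β, F (X β) β ∂(mOmega Ω))
      ∧ Integrable (fun β => if X β = 0 then (0 : ℝ) else 1) (mOmega Ω)
      ∧ (∫ β, (if X β = 0 then (0 : ℝ) else 1) ∂(mOmega Ω)) = L0norm Ω X := by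
    intro X hX hXb
    have hFint := hintF X hX hXb
    have hLX : Integrable (fun β => reInner μ (F (X β) β)) (mOmega Ω) :=
      (DualAux.LL μ).integrable_comp hFint
    have hJX : (∫ β, reInner μ (F (X β) β) ∂(mOmega Ω))
        = reInner μ (∫ β, F (X β) β ∂(mOmega Ω)) :=
      ContinuousLinearMap.integral_comp_comm (DualAux.LL μ) hFint
    have hs : MeasurableSet {β | X β ≠ 0} := by
      have hseq : {β | X β ≠ 0} = (X ⁻¹' {0})ᶜ := by ext β; simp
      rw [hseq]; exact (hX (measurableSet_singleton 0)).compl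
    have hindeq : (fun β => if X β = 0 then (0 : ℝ) else 1)
        = Set.indicator {β | X β ≠ 0} (fun _ => (1 : ℝ)) := by
      funext β; by_cases h : X β = 0 <;> simp [Set.indicator_apply, h]
    refine ⟨?_, hLX, hJX, ?_, ?_⟩
    · refine Integrable.mono' (integrable_const Γ)
        (continuous_norm.measurable.comp hX).aestronglyMeasurable ?_
      filter_upwards [hXb] with β h
      rwa [Real.norm_eq_abs, abs_of_nonneg (norm_nonneg _)]
    · rw [hindeq]; exact (integrable_const (1 : ℝ)).indicator hs
    · rw [hindeq]
      rw [show Set.indicator {β | X β ≠ 0} (fun _ => (1 : ℝ))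
          = Set.indicator {β | X β ≠ 0} 1 from rfl]
      rw [integral_indicator_one hs]
      rfl
  -- step 1 : L1 value against L0 value for the same X
  have hstep1 : ∀ X : (Fin n → ℝ) → ℂ, Measurable X →
      (∀ᵐ β ∂(mOmega Ω), ‖X β‖ ≤ Γ) →
      (∫ β, ‖X β‖ ∂(mOmega Ω)) ≤ Γ * L0norm Ω X := by
    intro X hX hXb
    obtain ⟨habs, _, _, hind, hindI⟩ := hXfacts X hX hXb
    have h1 : (∫ β, ‖X β‖ ∂(mOmega Ω))
        ≤ ∫ β, Γ * (if X β = 0 then (0 : ℝ) else 1) ∂(mOmega Ω) := by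
      refine integral_mono_ae habs (hind.const_mul Γ) ?_
      filter_upwards [hXb] with β h
      by_cases h0 : X β = 0
      · simp [h0]
      · simp only [if_neg h0, mul_one]; exact h
    rwa [integral_const_mul, hindI] at h1
  -- step 2a : ∫ M is below the (scaled) L1 objective
  have hstep2a : ∀ X : (Fin n → ℝ) → ℂ, Measurable X →
      (∀ᵐ β ∂(mOmega Ω), ‖X β‖ ≤ Γ) →
      (∫ β, M β ∂(mOmega Ω)) ≤ Γ⁻¹ * (∫ β, ‖X β‖ ∂(mOmega Ω))
        + reInner μ (∫ β, F (X β) β ∂(mOmega Ω)) := by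
    intro X hX hXb
    obtain ⟨habs, hL, hJ, _, _⟩ := hXfacts X hX hXb
    have h1 : (∫ β, M β ∂(mOmega Ω))
        ≤ ∫ β, (Γ⁻¹ * ‖X β‖ + reInner μ (F (X β) β)) ∂(mOmega Ω) := by
      refine integral_mono_ae hMint ((habs.const_mul Γ⁻¹).add hL) ?_
      filter_upwards [hXb, hΩae] with β hb hβ
      exact (hpt β hβ).1 (X β) hb
    have h2 : (∫ β, Γ⁻¹ * ‖X β‖ ∂(mOmega Ω))
        = Γ⁻¹ * ∫ β, ‖X β‖ ∂(mOmega Ω) := integral_const_mul _ _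
    rw [integral_add (habs.const_mul Γ⁻¹) hL, h2, hJ] at h1
    exact h1
  -- step 2b : near-optimal measurable selection for the L0 objective
  have hstep2b : ∀ ε : ℝ, 0 < ε → ∃ X' : (Fin n → ℝ) → ℂ, Measurable X' ∧
      (∀ᵐ β ∂(mOmega Ω), ‖X' β‖ ≤ Γ) ∧
      L0norm Ω X' + reInner μ (∫ β, F (X' β) β ∂(mOmega Ω))
        ≤ (∫ β, M β ∂(mOmega Ω)) + ε := by
    intro ε hε
    set T := (mOmega Ω Set.univ).toReal with hTdef
    have hT0 : (0 : ℝ) ≤ T := ENNReal.toReal_nonneg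
    set ε' := ε / (T + 1) with hε'def
    have hT1 : (0 : ℝ) < T + 1 := by linarith
    have hε' : 0 < ε' := by rw [hε'def]; positivity
    have hsm := hMint.aestronglyMeasurable
    have hM'meas : Measurable (hsm.mk M) := hsm.stronglyMeasurable_mk.measurable
    have hMM' : M =ᵐ[mOmega Ω] hsm.mk M := hsm.ae_eq_mk
    have hMspec : ∀ β ∈ Ω, ∃ x₀ : ℂ, ‖x₀‖ ≤ Γ ∧ (x₀ = 0 ∨ ‖x₀‖ = Γ) ∧
        (if x₀ = 0 then (0 : ℝ) else 1) + reInner μ (F x₀ β) = M β := by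
      intro β hβ
      obtain ⟨x₀, h1, h2, h3⟩ := (hpt β hβ).2
      exact ⟨x₀, h1, h2, h3⟩
    obtain ⟨X', hX'm, hX'B, hX'bound⟩ :=
      DualAux.selection Ω F Γ hΓ hF0 hFc hFm μ M (hsm.mk M) hM'meas hMM' hMspec hΩmeas ε' hε'
    have hX'b : ∀ᵐ β ∂(mOmega Ω), ‖X' β‖ ≤ Γ := ae_of_all _ hX'B
    obtain ⟨habs', hL', hJ', hind', hindI'⟩ := hXfacts X' hX'm hX'b
    refine ⟨X', hX'm, hX'b, ?_⟩
    have h1 : (∫ β, ((if X' β = 0 then (0 : ℝ) else 1) + reInner μ (F (X' β) β)) ∂(mOmega Ω))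
        ≤ ∫ β, (M β + ε') ∂(mOmega Ω) :=
      integral_mono_ae (hind'.add hL') (hMint.add (integrable_const ε')) hX'bound
    rw [integral_add hind' hL', hindI', hJ'] at h1
    rw [integral_add hMint (integrable_const ε'), integral_const, smul_eq_mul] at h1
    have h2 : (mOmega Ω Set.univ).toReal * ε' ≤ ε := by
      rw [hε'def, mul_comm, div_mul_eq_mul_div, div_le_iff₀ hT1]
      nlinarith
    change _ ≤ _ + (mOmega Ω Set.univ).toReal * ε' at h1
    linarith
  -- assemble
  unfold dual0 dual1 dualQ
  have hfeas0 : ((fun _ => (0 : ℂ)), (0 : Fin p → ℂ)) ∈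
      {Xz : ((Fin n → ℝ) → ℂ) × (Fin p → ℂ) |
        Measurable Xz.1 ∧ ∀ᵐ β ∂(mOmega Ω), ‖Xz.1 β‖ ≤ Γ} :=
    ⟨measurable_const, ae_of_all _ fun β => by simp [hΓ.le]⟩
  refine DualAux.sInf_scaling _ ⟨_, hfeas0⟩ _ _ Γ hΓ ?_ ?_
  · rintro ⟨X, z⟩ ⟨hX, hXb⟩
    have h1 := hstep1 X hX hXb
    have hsc : reInner (fun i => (Γ : ℂ) * μ i) ((∫ β, F (X β) β ∂(mOmega Ω)) - z)
        = Γ * reInner μ ((∫ β, F (X β) β ∂(mOmega Ω)) - z) := DualAux.reInner_scale Γ μ _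
    have hsum : (∑ i, Γ * ν i * g i z) = Γ * ∑ i, ν i * g i z := by
      rw [Finset.mul_sum]; exact Finset.sum_congr rfl fun i _ => by ring
    show (∫ β, ‖X β‖ ∂(mOmega Ω)) + (∑ i, Γ * ν i * g i z)
        + reInner (fun i => (Γ : ℂ) * μ i) ((∫ β, F (X β) β ∂(mOmega Ω)) - z)
      ≤ Γ * (L0norm Ω X + (∑ i, ν i * g i z)
        + reInner μ ((∫ β, F (X β) β ∂(mOmega Ω)) - z))
    rw [hsc, hsum]
    nlinarith [h1]
  · rintro ⟨X, z⟩ ⟨hX, hXb⟩ ε hε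
    obtain ⟨habs, hL, hJ, hind, hindI⟩ := hXfacts X hX hXb
    obtain ⟨X', hX'm, hX'b, hX'val⟩ := hstep2b ε hε
    obtain ⟨habs', hL', hJ', hind', hindI'⟩ := hXfacts X' hX'm hX'b
    refine ⟨(X', z), ⟨hX'm, hX'b⟩, ?_⟩
    have h2a := hstep2a X hX hXb
    have hsc : reInner (fun i => (Γ : ℂ) * μ i) ((∫ β, F (X β) β ∂(mOmega Ω)) - z)
        = Γ * reInner μ ((∫ β, F (X β) β ∂(mOmega Ω)) - z) := DualAux.reInner_scale Γ μ _
    have hsum : (∑ i, Γ * ν i * g i z) = Γ * ∑ i, ν i * g i z := by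
      rw [Finset.mul_sum]; exact Finset.sum_congr rfl fun i _ => by ring
    have hsubX : reInner μ ((∫ β, F (X β) β ∂(mOmega Ω)) - z)
        = reInner μ (∫ β, F (X β) β ∂(mOmega Ω)) - reInner μ z :=
      DualAux.reInner_sub μ _ _
    have hsubX' : reInner μ ((∫ β, F (X' β) β ∂(mOmega Ω)) - z)
        = reInner μ (∫ β, F (X' β) β ∂(mOmega Ω)) - reInner μ z :=
      DualAux.reInner_sub μ _ _
    show L0norm Ω X' + (∑ i, ν i * g i z)
        + reInner μ ((∫ β, F (X' β) β ∂(mOmega Ω)) - z)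
      ≤ Γ⁻¹ * ((∫ β, ‖X β‖ ∂(mOmega Ω)) + (∑ i, Γ * ν i * g i z)
        + reInner (fun i => (Γ : ℂ) * μ i) ((∫ β, F (X β) β ∂(mOmega Ω)) - z)) + ε
    rw [hsc, hsum, hsubX, hsubX']
    have hΓne : Γ ≠ 0 := ne_of_gt hΓ
    have hexp : Γ⁻¹ * ((∫ β, ‖X β‖ ∂(mOmega Ω)) + Γ * (∑ i, ν i * g i z)
        + Γ * (reInner μ (∫ β, F (X β) β ∂(mOmega Ω)) - reInner μ z))
      = Γ⁻¹ * (∫ β, ‖X β‖ ∂(mOmega Ω)) + (∑ i, ν i * g i z)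
        + reInner μ (∫ β, F (X β) β ∂(mOmega Ω)) - reInner μ z := by
      field_simp
      ring
    rw [hexp]
    linarith
end
end

section
/- Optimal value of the example L0 problem: let Γ > 0 and y₁, y₂ ∈ ℝ with |y₁| < Γ/2 and |y₂| < Γ/2. Then the infimum of ‖X‖_{L0} = 𝔪({β ∈ [0,1] : X(β) ≠ 0}) over all measurable X : [0,1] → ℝ with |X(β)| ≤ Γ a.e., ∫₀^{1/2} X(β) dβ = y₁, and ∫_{1/2}^{1} X(β) dβ = y₂ equals (|y₁| + |y₂|)/Γ, and it is attained by X_Γ(β) := Γ·sign(y₁)·1_{A₁}(β) + Γ·sign(y₂)·1_{A₂}(β) for any measurable A₁ ⊆ [0,1/2], A₂ ⊆ [1/2,1] with 𝔪(A₁) = |y₁|/Γ and 𝔪(A₂) = |y₂|/Γ. -/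
open MeasureTheory

noncomputable section

/-- The function `X_Γ = Γ·sign(y₁)·1_{A₁} + Γ·sign(y₂)·1_{A₂}`. -/
def XGamma (Γ y₁ y₂ : ℝ) (A₁ A₂ : Set ℝ) (β : ℝ) : ℝ :=
  Γ * Real.sign y₁ * Set.indicator A₁ (fun _ => (1 : ℝ)) β
    + Γ * Real.sign y₂ * Set.indicator A₂ (fun _ => (1 : ℝ)) β


lemma sign_mul_abs' (y : ℝ) : Real.sign y * |y| = y := by
  rcases lt_trichotomy y 0 with h|h|h
  · rw [Real.sign_of_neg h, abs_of_neg h]; ring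
  · simp [h]
  · rw [Real.sign_of_pos h, abs_of_pos h]; ring

lemma abs_sign_le_one (y : ℝ) : |Real.sign y| ≤ 1 := by
  rcases Real.sign_apply_eq y with h|h|h <;> simp [h]

lemma interval_bound (Γ : ℝ) (X : ℝ → ℝ) (hX : Measurable X)
    (I : Set ℝ) (hfin : volume I ≠ ⊤)
    (hb : ∀ᵐ β ∂(volume.restrict I), |X β| ≤ Γ) :
    |∫ β in I, X β| ≤ Γ * (volume (I ∩ {β | X β ≠ 0})).toReal := by
  set S : Set ℝ := {β | X β ≠ 0} with hSdef
  have hS : MeasurableSet S := (hX (measurableSet_singleton 0)).compl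
  have hconst : IntegrableOn (fun _ => Γ) I volume :=
    integrableOn_const hfin
  have hint : IntegrableOn X I := by
    apply Integrable.mono' hconst hX.aestronglyMeasurable.restrict
    simpa [Real.norm_eq_abs] using hb
  have hmono : ∫ β in I, |X β| ≤ ∫ β in I, S.indicator (fun _ => Γ) β := by
    apply integral_mono_ae hint.abs (hconst.indicator hS)
    filter_upwards [hb] with β hβ
    by_cases h : X β = 0
    · simp only [h, abs_zero]
      exact Set.indicator_apply_nonneg fun _ => le_trans (abs_nonneg _) hβ
    · rw [Set.indicator_of_mem (show β ∈ S from h)]; exact hβ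
  calc |∫ β in I, X β| ≤ ∫ β in I, |X β| := by
        simpa [Real.norm_eq_abs] using norm_integral_le_integral_norm (μ := volume.restrict I) X
    _ ≤ ∫ β in I, S.indicator (fun _ => Γ) β := hmono
    _ = Γ * (volume (I ∩ S)).toReal := by
        rw [setIntegral_indicator hS, setIntegral_const, smul_eq_mul, mul_comm]; rfl

lemma xg_props (Γ y₁ y₂ : ℝ) (hΓ : 0 < Γ) (h₁ : |y₁| < Γ / 2) (h₂ : |y₂| < Γ / 2)
    (A₁ A₂ : Set ℝ) (hA₁ : MeasurableSet A₁) (hA₂ : MeasurableSet A₂)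
    (hs₁ : A₁ ⊆ Set.Icc (0 : ℝ) (1 / 2)) (hs₂ : A₂ ⊆ Set.Icc (1 / 2 : ℝ) 1)
    (hv₁ : volume A₁ = ENNReal.ofReal (|y₁| / Γ)) (hv₂ : volume A₂ = ENNReal.ofReal (|y₂| / Γ)) :
    Measurable (XGamma Γ y₁ y₂ A₁ A₂) ∧
      (∀ᵐ β ∂(volume.restrict (Set.Icc (0 : ℝ) 1)), |XGamma Γ y₁ y₂ A₁ A₂ β| ≤ Γ) ∧
      (∫ β in Set.Icc (0 : ℝ) (1 / 2), XGamma Γ y₁ y₂ A₁ A₂ β) = y₁ ∧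
      (∫ β in Set.Icc (1 / 2 : ℝ) 1, XGamma Γ y₁ y₂ A₁ A₂ β) = y₂ ∧
      (volume {β | β ∈ Set.Icc (0 : ℝ) 1 ∧ XGamma Γ y₁ y₂ A₁ A₂ β ≠ 0}).toReal
        = (|y₁| + |y₂|) / Γ := by
  have hmeas : Measurable (XGamma Γ y₁ y₂ A₁ A₂) := by
    unfold XGamma
    exact (measurable_const.mul (measurable_const.indicator hA₁)).add
      (measurable_const.mul (measurable_const.indicator hA₂))
  -- disjointness away from 1/2
  have hhalf : ∀ β : ℝ, β ≠ 1/2 → β ∈ A₁ → β ∉ A₂ := by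
    intro β hβ h1 h2
    exact hβ (le_antisymm (hs₁ h1).2 (hs₂ h2).1)
  -- values
  have hval₁ : ∀ β : ℝ, β ≠ 1/2 → β ∈ A₁ → XGamma Γ y₁ y₂ A₁ A₂ β = Γ * Real.sign y₁ := by
    intro β hβ h1
    simp [XGamma, Set.indicator_of_mem h1, Set.indicator_of_notMem (hhalf β hβ h1)]
  have hval₂ : ∀ β : ℝ, β ≠ 1/2 → β ∉ A₁ → β ∈ A₂ → XGamma Γ y₁ y₂ A₁ A₂ β = Γ * Real.sign y₂ := by
    intro β hβ h1 h2
    simp [XGamma, Set.indicator_of_mem h2, Set.indicator_of_notMem h1]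
  have hval₀ : ∀ β : ℝ, β ∉ A₁ → β ∉ A₂ → XGamma Γ y₁ y₂ A₁ A₂ β = 0 := by
    intro β h1 h2
    simp [XGamma, Set.indicator_of_notMem h1, Set.indicator_of_notMem h2]
  have hne : ∀ᵐ β ∂(volume.restrict (Set.Icc (0 : ℝ) 1)), β ≠ 1/2 := by
    apply ae_restrict_of_ae
    have : ({(1:ℝ)/2} : Set ℝ) =  {β : ℝ | ¬ β ≠ 1/2} := by ext x; simp
    rw [Filter.eventually_iff, mem_ae_iff]
    simp only [Set.compl_setOf, not_not]
    rw [show {β : ℝ | ¬ β ≠ 1/2} = {(1:ℝ)/2} from by ext x; simp] at *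
    exact Real.volume_singleton
  have hbd : ∀ᵐ β ∂(volume.restrict (Set.Icc (0 : ℝ) 1)), |XGamma Γ y₁ y₂ A₁ A₂ β| ≤ Γ := by
    filter_upwards [hne] with β hβ
    by_cases h1 : β ∈ A₁
    · rw [hval₁ β hβ h1, abs_mul, abs_of_pos hΓ]
      nlinarith [abs_sign_le_one y₁]
    · by_cases h2 : β ∈ A₂
      · rw [hval₂ β hβ h1 h2, abs_mul, abs_of_pos hΓ]
        nlinarith [abs_sign_le_one y₂]
      · rw [hval₀ β h1 h2]; simpa using hΓ.le
  -- integrals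
  have hint₁ : ∀ (c : ℝ) (A : Set ℝ), MeasurableSet A → ∀ (I : Set ℝ), volume I ≠ ⊤ →
      Integrable (fun β => c * A.indicator (fun _ => (1:ℝ)) β) (volume.restrict I) := by
    intro c A hA I hI
    apply Integrable.const_mul
    exact (integrableOn_const hI).indicator hA
  have hIvol : ∀ a b : ℝ, volume (Set.Icc a b) ≠ ⊤ := by
    intro a b; rw [Real.volume_Icc]; exact ENNReal.ofReal_ne_top
  have hIeq : ∀ (c : ℝ) (A : Set ℝ) (hA : MeasurableSet A) (I : Set ℝ),
      (∫ β in I, c * A.indicator (fun _ => (1:ℝ)) β) = c * (volume (I ∩ A)).toReal := by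
    intro c A hA I
    rw [integral_const_mul]
    rw [setIntegral_indicator hA]
    simp [setIntegral_const, Measure.real]
  have hi₁ : (∫ β in Set.Icc (0 : ℝ) (1 / 2), XGamma Γ y₁ y₂ A₁ A₂ β) = y₁ := by
    unfold XGamma
    rw [integral_add (hint₁ _ _ hA₁ _ (hIvol _ _)) (hint₁ _ _ hA₂ _ (hIvol _ _)),
      hIeq _ _ hA₁, hIeq _ _ hA₂]
    have e1 : Set.Icc (0:ℝ) (1/2) ∩ A₁ = A₁ := Set.inter_eq_self_of_subset_right hs₁
    have e2 : volume (Set.Icc (0:ℝ) (1/2) ∩ A₂) = 0 := by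
      apply measure_mono_null (t := {(1:ℝ)/2})
      · intro x ⟨hx1, hx2⟩
        exact le_antisymm hx1.2 (hs₂ hx2).1
      · exact Real.volume_singleton
    rw [e1, e2, hv₁, ENNReal.toReal_ofReal (by positivity)]
    field_simp
    simp only [ENNReal.toReal_zero, mul_zero, add_zero, zero_add]
    linear_combination sign_mul_abs' y₁
  have hi₂ : (∫ β in Set.Icc (1 / 2 : ℝ) 1, XGamma Γ y₁ y₂ A₁ A₂ β) = y₂ := by
    unfold XGamma
    rw [integral_add (hint₁ _ _ hA₁ _ (hIvol _ _)) (hint₁ _ _ hA₂ _ (hIvol _ _)),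
      hIeq _ _ hA₁, hIeq _ _ hA₂]
    have e1 : Set.Icc (1/2:ℝ) 1 ∩ A₂ = A₂ := Set.inter_eq_self_of_subset_right hs₂
    have e2 : volume (Set.Icc (1/2:ℝ) 1 ∩ A₁) = 0 := by
      apply measure_mono_null (t := {(1:ℝ)/2}) ?_ Real.volume_singleton
      rintro x ⟨hx1, hx2⟩
      exact le_antisymm (hs₁ hx2).2 hx1.1
    rw [e1, e2, hv₂, ENNReal.toReal_ofReal (by positivity)]
    field_simp
    simp only [ENNReal.toReal_zero, mul_zero, add_zero, zero_add]
    linear_combination sign_mul_abs' y₂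
  refine ⟨hmeas, hbd, hi₁, hi₂, ?_⟩
  set T := {β | β ∈ Set.Icc (0 : ℝ) 1 ∧ XGamma Γ y₁ y₂ A₁ A₂ β ≠ 0} with hT
  set N : Set ℝ := ({1/2} ∪ (if y₁ = 0 then A₁ else ∅)) ∪ (if y₂ = 0 then A₂ else ∅) with hNdef
  have hN : volume N = 0 := by
    apply measure_union_null
    apply measure_union_null
    · exact Real.volume_singleton
    · split_ifs with h
      · rw [hv₁, h]; simp
      · simp
    · split_ifs with h
      · rw [hv₂, h]; simp
      · simp
  have hub : T ⊆ A₁ ∪ A₂ := by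
    rintro β ⟨hβ, hne0⟩
    by_contra h
    exact hne0 (hval₀ β (fun hh => h (Or.inl hh)) (fun hh => h (Or.inr hh)))
  have hlb : (A₁ ∪ A₂) \ N ⊆ T := by
    rintro β ⟨hβ, hβN⟩
    have hβhalf : β ≠ 1/2 := fun h => hβN (Or.inl (Or.inl h))
    rcases hβ with h1 | h2
    · have hy1 : y₁ ≠ 0 := fun h => hβN (Or.inl (Or.inr (by simp [h, h1])))
      refine ⟨Set.Icc_subset_Icc_right (by norm_num) (hs₁ h1), ?_⟩
      rw [hval₁ β hβhalf h1]
      exact mul_ne_zero hΓ.ne' (fun h => hy1 (Real.sign_eq_zero_iff.1 h))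
    · have hy2 : y₂ ≠ 0 := fun h => hβN (Or.inr (by simp [h, h2]))
      refine ⟨Set.Icc_subset_Icc_left (by norm_num) (hs₂ h2), ?_⟩
      have h1 : β ∉ A₁ := by
        intro hh
        exact hβhalf (le_antisymm (hs₁ hh).2 (hs₂ h2).1)
      rw [hval₂ β hβhalf h1 h2]
      exact mul_ne_zero hΓ.ne' (fun h => hy2 (Real.sign_eq_zero_iff.1 h))
  have hmT : volume T = volume (A₁ ∪ A₂) := by
    apply le_antisymm (measure_mono hub)
    calc volume (A₁ ∪ A₂) = volume ((A₁ ∪ A₂) \ N) := (measure_diff_null hN).symm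
      _ ≤ volume T := measure_mono hlb
  have hinter : volume (A₁ ∩ A₂) = 0 := by
    apply measure_mono_null (t := {(1:ℝ)/2}) ?_ Real.volume_singleton
    rintro x ⟨hx1, hx2⟩
    exact le_antisymm (hs₁ hx1).2 (hs₂ hx2).1
  have hu : volume (A₁ ∪ A₂) = volume A₁ + volume A₂ := by
    have h := measure_union_add_inter (μ := volume) A₁ hA₂
    rw [hinter, add_zero] at h
    exact h
  rw [hmT, hu, hv₁, hv₂, ← ENNReal.ofReal_add (by positivity) (by positivity),
    ENNReal.toReal_ofReal (by positivity), add_div]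

/-- **Optimal value of the example L0 problem.**  For `Γ > 0` and `|y₁|, |y₂| < Γ/2`, the
infimum of `‖X‖_{L0} = 𝔪({β ∈ [0,1] : X(β) ≠ 0})` over measurable `X : [0,1] → ℝ` with
`|X(β)| ≤ Γ` a.e., `∫₀^{1/2} X = y₁`, and `∫_{1/2}^1 X = y₂` equals `(|y₁| + |y₂|)/Γ`;
it is attained by `X_Γ = Γ·sign(y₁)·1_{A₁} + Γ·sign(y₂)·1_{A₂}` for any measurable
`A₁ ⊆ [0, 1/2]`, `A₂ ⊆ [1/2, 1]` with `𝔪(A₁) = |y₁|/Γ` and `𝔪(A₂) = |y₂|/Γ`. -/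
theorem example_L0_value
    (Γ y₁ y₂ : ℝ) (hΓ : 0 < Γ) (h₁ : |y₁| < Γ / 2) (h₂ : |y₂| < Γ / 2) :
    IsLeast {c : ℝ | ∃ X : ℝ → ℝ, Measurable X ∧
        (∀ᵐ β ∂(volume.restrict (Set.Icc (0 : ℝ) 1)), |X β| ≤ Γ) ∧
        (∫ β in Set.Icc (0 : ℝ) (1 / 2), X β) = y₁ ∧
        (∫ β in Set.Icc (1 / 2 : ℝ) 1, X β) = y₂ ∧
        c = (volume {β | β ∈ Set.Icc (0 : ℝ) 1 ∧ X β ≠ 0}).toReal}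
      ((|y₁| + |y₂|) / Γ) ∧
    ∀ A₁ A₂ : Set ℝ, MeasurableSet A₁ → MeasurableSet A₂ →
      A₁ ⊆ Set.Icc (0 : ℝ) (1 / 2) → A₂ ⊆ Set.Icc (1 / 2 : ℝ) 1 →
      volume A₁ = ENNReal.ofReal (|y₁| / Γ) → volume A₂ = ENNReal.ofReal (|y₂| / Γ) →
      Measurable (XGamma Γ y₁ y₂ A₁ A₂) ∧
      (∀ᵐ β ∂(volume.restrict (Set.Icc (0 : ℝ) 1)), |XGamma Γ y₁ y₂ A₁ A₂ β| ≤ Γ) ∧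
      (∫ β in Set.Icc (0 : ℝ) (1 / 2), XGamma Γ y₁ y₂ A₁ A₂ β) = y₁ ∧
      (∫ β in Set.Icc (1 / 2 : ℝ) 1, XGamma Γ y₁ y₂ A₁ A₂ β) = y₂ ∧
      (volume {β | β ∈ Set.Icc (0 : ℝ) 1 ∧ XGamma Γ y₁ y₂ A₁ A₂ β ≠ 0}).toReal
        = (|y₁| + |y₂|) / Γ := by
  constructor
  · constructor
    · -- membership: explicit witness sets
      have hq1 : (0:ℝ) ≤ |y₁| / Γ := by positivity
      have hq2 : (0:ℝ) ≤ |y₂| / Γ := by positivity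
      have hh1 : |y₁| / Γ ≤ 1/2 := by
        rw [div_le_iff₀ hΓ]; nlinarith
      have hh2 : |y₂| / Γ ≤ 1/2 := by
        rw [div_le_iff₀ hΓ]; nlinarith
      obtain ⟨hm, hb, hi1, hi2, hvol⟩ := xg_props Γ y₁ y₂ hΓ h₁ h₂
        (Set.Icc 0 (|y₁| / Γ)) (Set.Icc (1/2) (1/2 + |y₂| / Γ))
        measurableSet_Icc measurableSet_Icc
        (Set.Icc_subset_Icc_right hh1)
        (Set.Icc_subset_Icc_right (by linarith))
        (by rw [Real.volume_Icc, sub_zero])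
        (by rw [Real.volume_Icc]; ring_nf)
      exact ⟨_, hm, hb, hi1, hi2, hvol.symm⟩
    · -- lower bound
      rintro c ⟨X, hXm, hb, hI1, hI2, rfl⟩
      set S' : Set ℝ := {β | X β ≠ 0} with hS'def
      have hS' : MeasurableSet S' := (hXm (measurableSet_singleton 0)).compl
      have hfin : ∀ a b : ℝ, volume (Set.Icc a b) ≠ ⊤ := by
        intro a b; rw [Real.volume_Icc]; exact ENNReal.ofReal_ne_top
      have hb1 : ∀ᵐ β ∂(volume.restrict (Set.Icc (0:ℝ) (1/2))), |X β| ≤ Γ :=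
        ae_restrict_of_ae_restrict_of_subset (Set.Icc_subset_Icc_right (by norm_num)) hb
      have hb2 : ∀ᵐ β ∂(volume.restrict (Set.Icc (1/2:ℝ) 1)), |X β| ≤ Γ :=
        ae_restrict_of_ae_restrict_of_subset (Set.Icc_subset_Icc_left (by norm_num)) hb
      have k1 := interval_bound Γ X hXm _ (hfin 0 (1/2)) hb1
      have k2 := interval_bound Γ X hXm _ (hfin (1/2) 1) hb2
      rw [hI1] at k1
      rw [hI2] at k2
      set m₁ := volume (Set.Icc (0:ℝ) (1/2) ∩ S') with hm₁
      set m₂ := volume (Set.Icc (1/2:ℝ) 1 ∩ S') with hm₂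
      have hTset : {β | β ∈ Set.Icc (0 : ℝ) 1 ∧ X β ≠ 0} = Set.Icc (0:ℝ) 1 ∩ S' := by
        ext x; simp [hS'def, Set.mem_inter_iff]
      have hsum : m₁ + m₂ = volume (Set.Icc (0:ℝ) 1 ∩ S') := by
        have hadd := measure_union_add_inter (μ := volume)
          (Set.Icc (0:ℝ) (1/2) ∩ S') (measurableSet_Icc.inter hS')
          (t := Set.Icc (1/2:ℝ) 1 ∩ S')
        have hun : (Set.Icc (0:ℝ) (1/2) ∩ S') ∪ (Set.Icc (1/2:ℝ) 1 ∩ S')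
            = Set.Icc (0:ℝ) 1 ∩ S' := by
          rw [← Set.union_inter_distrib_right,
            Set.Icc_union_Icc_eq_Icc (by norm_num : (0:ℝ) ≤ 1/2) (by norm_num : (1/2:ℝ) ≤ 1)]
        have hzero : volume ((Set.Icc (0:ℝ) (1/2) ∩ S') ∩ (Set.Icc (1/2:ℝ) 1 ∩ S')) = 0 := by
          apply measure_mono_null (t := {(1:ℝ)/2}) ?_ Real.volume_singleton
          rintro x ⟨⟨hx1, _⟩, ⟨hx2, _⟩⟩
          exact le_antisymm hx1.2 hx2.1
        rw [hun, hzero, add_zero] at hadd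
        exact hadd.symm
      have hfin1 : m₁ ≠ ⊤ := fun h => (hfin 0 (1/2)) (top_le_iff.1 (h ▸ measure_mono Set.inter_subset_left))
      have hfin2 : m₂ ≠ ⊤ := fun h => (hfin (1/2) 1) (top_le_iff.1 (h ▸ measure_mono Set.inter_subset_left))
      have htr : m₁.toReal + m₂.toReal
          = (volume {β | β ∈ Set.Icc (0 : ℝ) 1 ∧ X β ≠ 0}).toReal := by
        rw [hTset, ← hsum, ENNReal.toReal_add hfin1 hfin2]
      rw [div_le_iff₀ hΓ]
      nlinarith [abs_nonneg y₁, abs_nonneg y₂]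
  · intro A₁ A₂ hA₁ hA₂ hs₁ hs₂ hv₁ hv₂
    exact xg_props Γ y₁ y₂ hΓ h₁ h₂ A₁ A₂ hA₁ hA₂ hs₁ hs₂ hv₁ hv₂

end
end
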